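/- Let n ≥ 2 and let G be a simple graph on a vertex set of cardinality n+1 having exactly n+1 edges, such that every cycle of G has length at least n+1. Then G is isomorphic to the cycle graph on n+1 vertices. -/

import Mathlib

open SimpleGraph Walk

private lemma aux_support_getElem {V : Type*} {G : SimpleGraph V} {u v : V} (p : G.Walk u v) :
    ∀ (i : ℕ) (hi : i < p.support.length), p.support[i] = p.getVert i := by
  induction p with
  | nil => intro i hi; simp at hi; subst hi; simp
  | cons h q ih =>
    intro i hi
    cases i with
    | zero => simp
    | succ m =>
      simp only [support_cons, List.getElem_cons_succ, getVert_cons_succ]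
      exact ih m (by simp only [support_cons, List.length_cons] at hi; omega)

private lemma aux_path_getVert_injOn {V : Type*} {G : SimpleGraph V} {u v : V} {p : G.Walk u v}
    (hp : p.IsPath) {i j : ℕ}
    (hi : i ≤ p.length) (hj : j ≤ p.length) (h : p.getVert i = p.getVert j) : i = j := by
  have hl : p.support.length = p.length + 1 := by simp [Walk.length_support]
  have h1 : p.support[i]'(by omega) = p.support[j]'(by omega) := by
    rw [aux_support_getElem p i (by omega), aux_support_getElem p j (by omega)]; exact h
  exact (List.Nodup.getElem_inj_iff hp.support_nodup).mp h1

private lemma aux_cycle_getVert_injOn {V : Type*} {G : SimpleGraph V} {v : V} {c : G.Walk v v}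
    (hc : c.IsCycle) {i j : ℕ}
    (hi : i < c.length) (hj : j < c.length) (h : c.getVert i = c.getVert j) : i = j := by
  have hl : c.support.length = c.length + 1 := by simp [Walk.length_support]
  have htl : c.support.tail.length = c.length := by simp [hl]
  have hget : ∀ (k : ℕ) (hk : k < c.length),
      c.support.tail[(if k = 0 then c.length else k) - 1]'(by split <;> omega)
      = c.getVert k := by
    intro k hk
    have h3 : 3 ≤ c.length := hc.three_le_length
    split
    · next hk0 =>
      subst hk0
      have : c.support.tail[c.length - 1]'(by omega) = c.support[c.length]'(by omega) := by
        rw [List.getElem_tail]; congr 1; omega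
      rw [this, aux_support_getElem c c.length (by omega), Walk.getVert_length, Walk.getVert_zero]
    · next hk0 =>
      have : c.support.tail[k - 1]'(by omega) = c.support[k]'(by omega) := by
        rw [List.getElem_tail]; congr 1; omega
      rw [this, aux_support_getElem c k (by omega)]
  have h1 := (List.Nodup.getElem_inj_iff hc.support_nodup).mp
    (((hget i hi).trans h).trans (hget j hj).symm)
  split at h1 <;> split at h1 <;> omega

private lemma aux_mem_edges {V : Type*} {G : SimpleGraph V} {u v : V} {p : G.Walk u v}
    {e : Sym2 V} (he : e ∈ p.edges) :
    ∃ i < p.length, e = s(p.getVert i, p.getVert (i + 1)) := by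
  induction p with
  | nil => simp at he
  | cons h q ih =>
    rw [Walk.edges_cons, List.mem_cons] at he
    rcases he with rfl | he
    · exact ⟨0, by simp, by simp [Walk.getVert_cons_succ]⟩
    · obtain ⟨i, hi, rfl⟩ := ih he
      exact ⟨i + 1, by simp [hi], by simp [Walk.getVert_cons_succ]⟩

private lemma aux_path_edge_end {V : Type*} {G : SimpleGraph V} {u v : V} {p : G.Walk u v}
    (hp : p.IsPath) (he : s(u, v) ∈ p.edges) : p.length = 1 := by
  obtain ⟨i, hi, hs⟩ := aux_mem_edges he
  rw [Sym2.eq_iff] at hs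
  rcases hs with ⟨h1, h2⟩ | ⟨h1, h2⟩
  · have := aux_path_getVert_injOn hp (i := 0) (j := i) (by omega) (by omega)
      (by rw [Walk.getVert_zero]; exact h1)
    have := aux_path_getVert_injOn hp (i := p.length) (j := i + 1) le_rfl (by omega)
      (by rw [Walk.getVert_length]; exact h2)
    omega
  · have := aux_path_getVert_injOn hp (i := 0) (j := i + 1) (by omega) (by omega)
      (by rw [Walk.getVert_zero]; exact h1)
    omega

private lemma aux_acyclic_card_lt {V : Type*} [Fintype V] [Nonempty V] {G : SimpleGraph V}
    [DecidableEq V] [Fintype G.edgeSet] (hG : G.IsAcyclic) :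
    G.edgeFinset.card < Fintype.card V := by
  classical
  set root : V → V := fun v => (G.connectedComponentMk v).out with hroot
  have hreach : ∀ v, G.Reachable v (root v) := by
    intro v
    apply ConnectedComponent.exact
    rw [hroot]
    exact (Quot.out_eq _).symm
  set fp : ∀ v, G.Walk v (root v) := fun v => ((hreach v).some.toPath : G.Path _ _) with hfpdef
  have hfp : ∀ v, (fp v).IsPath := fun v => ((hreach v).some.toPath).2
  have huniq : ∀ (v : V) (q : G.Walk v (root v)), q.IsPath → q = fp v := by
    intro v q hq
    exact congrArg Subtype.val (hG.path_unique ⟨q, hq⟩ ⟨fp v, hfp v⟩)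
  have hlen0 : ∀ (v : V), v = root v → (fp v).length = 0 := by
    intro v h
    have := huniq v ((Walk.nil : G.Walk v v).copy rfl h) (by simp)
    rw [← this]; simp
  have key : ∀ e ∈ G.edgeFinset, ∃ w : V, w ≠ root w ∧ ¬ (fp w).Nil ∧
      e = s(w, (fp w).getVert 1) := by
    intro e he
    rw [mem_edgeFinset] at he
    induction e with
    | _ x y =>
      have hxy : G.Adj x y := he
      have hrxy : root x = root y := by
        rw [hroot]
        simp only
        rw [ConnectedComponent.connectedComponentMk_eq_of_adj hxy]
      by_cases hy : y ∈ (fp x).support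
      · have hxny : x ≠ y := hxy.ne
        set q := (fp x).takeUntil y hy with hq
        have hqp : q.IsPath := (hfp x).takeUntil hy
        have hql : q.length = 1 := by
          by_cases hmem : s(x, y) ∈ q.edges
          · exact aux_path_edge_end hqp hmem
          · exfalso
            apply hG (Walk.cons hxy.symm q)
            apply Path.cons_isCycle ⟨q, hqp⟩ hxy.symm
            rwa [Sym2.eq_swap]
        have hspec := (fp x).take_spec hy
        have hgv1 : (fp x).getVert 1 = y := by
          rw [← hspec, Walk.getVert_append]
          simp [← hq, hql]
        have hlen : (fp x).length ≠ 0 := by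
          rw [← hspec, Walk.length_append, ← hq, hql]
          omega
        refine ⟨x, fun h => hlen (hlen0 x h), ?_, ?_⟩
        · rw [Walk.nil_iff_length_eq]; exact hlen
        · rw [hgv1]
      · have hW : ((Walk.cons hxy.symm (fp x)).copy rfl hrxy).IsPath := by
          rw [Walk.isPath_copy, Walk.cons_isPath_iff]
          exact ⟨hfp x, hy⟩
        have heq := huniq y _ hW
        have hgv1 : (fp y).getVert 1 = x := by
          rw [← heq]
          simp [Walk.getVert_cons_succ]
        have hlen : (fp y).length ≠ 0 := by
          rw [← heq]
          simp
        refine ⟨y, fun h => hlen (hlen0 y h), ?_, ?_⟩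
        · rw [Walk.nil_iff_length_eq]; exact hlen
        · rw [hgv1, Sym2.eq_swap]
  choose g hg1 hg2 hg3 using key
  have hcard : G.edgeFinset.card ≤ (Finset.univ.filter (fun w => w ≠ root w)).card := by
    apply Finset.card_le_card_of_injOn
      (fun e => if he : e ∈ G.edgeFinset then g e he else Classical.arbitrary V)
    · intro e he
      simp only [he, dif_pos, Finset.mem_filter, Finset.mem_univ, true_and]
      simpa [Finset.mem_coe.mp he] using hg1 e (Finset.mem_coe.mp he)
    · intro e1 h1 e2 h2 heq
      simp only [Finset.mem_coe] at h1 h2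
      simp only [h1, h2, dif_pos] at heq
      rw [hg3 e1 h1, hg3 e2 h2, heq]
  refine lt_of_le_of_lt hcard ?_
  rw [← Finset.card_univ]
  apply Finset.card_lt_card
  rw [Finset.ssubset_univ_iff]
  intro h
  obtain ⟨v0⟩ := ‹Nonempty V›
  have : root v0 ∈ Finset.univ.filter (fun w => w ≠ root w) := by
    rw [h]; exact Finset.mem_univ _
  rw [Finset.mem_filter] at this
  apply this.2
  rw [hroot]
  simp only
  exact congrArg Quot.out (Quot.out_eq (G.connectedComponentMk v0)).symm

/-- A simple graph on `n + 1` vertices (`n ≥ 2`) with exactly `n + 1` edges,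
all of whose cycles have length at least `n + 1`, is isomorphic to the cycle graph on `n + 1`
vertices. -/
theorem graph_is_cycle_of_long_cycles {n : ℕ} (hn : 2 ≤ n) {V : Type*} [Fintype V]
    (hV : Fintype.card V = n + 1) (G : SimpleGraph V)
    (hedges : G.edgeSet.ncard = n + 1)
    (hcyc : ∀ (x : V) (w : G.Walk x x), w.IsCycle → n + 1 ≤ w.length) :
    Nonempty (G ≃g SimpleGraph.cycleGraph (n + 1)) := by
  classical
  have hne : Nonempty V := by
    rw [← Fintype.card_pos_iff, hV]; omega
  have hE : G.edgeFinset.card = n + 1 := by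
    rw [← hedges, edgeFinset]
    exact (Set.ncard_eq_toFinset_card' _).symm
  have hnac : ¬ G.IsAcyclic := by
    intro h
    have := aux_acyclic_card_lt h
    rw [hE, hV] at this
    omega
  have hex : ∃ (v : V) (c : G.Walk v v), c.IsCycle := by
    by_contra hcon
    push_neg at hcon
    exact hnac fun v c hc => hcon v c hc
  obtain ⟨v, c, hc⟩ := hex
  have hlen : c.length = n + 1 := by
    have h1 := hcyc v c hc
    have h2 : c.support.tail.length = c.length := by simp [Walk.length_support]
    have h3 := List.Nodup.length_le_card hc.support_nodup
    rw [h2, hV] at h3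
    omega
  -- the edges of `c` are exactly the edges of `G`
  have hedge_eq : c.edges.toFinset = G.edgeFinset := by
    apply Finset.eq_of_subset_of_card_le
    · intro e he
      rw [List.mem_toFinset] at he
      rw [mem_edgeFinset]
      exact c.edges_subset_edgeSet he
    · rw [hE, List.toFinset_card_of_nodup hc.edges_nodup,
        Walk.length_edges, hlen]
  have hmemedge : ∀ e, e ∈ G.edgeSet ↔ e ∈ c.edges := by
    intro e
    rw [← mem_edgeFinset, ← hedge_eq, List.mem_toFinset]
  set f : Fin (n + 1) → V := fun i => c.getVert i.val with hf
  have hflt : ∀ i : Fin (n + 1), (i : ℕ) < c.length := fun i => by rw [hlen]; exact i.2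
  have finj : Function.Injective f :=
    fun i j hij => Fin.ext (aux_cycle_getVert_injOn hc (hflt i) (hflt j) hij)
  have hbij : Function.Bijective f :=
    (Fintype.bijective_iff_injective_and_card f).mpr ⟨finj, by simp [hV]⟩
  have hone : ((1 : Fin (n + 1)) : ℕ) = 1 := by
    rw [Fin.val_one']; exact Nat.mod_eq_of_lt (by omega)
  have hadj1 : ∀ i : Fin (n + 1), G.Adj (f i) (f (i + 1)) := by
    intro i
    rcases eq_or_ne i (Fin.last n) with h | h
    · have h1 : ((i + 1 : Fin (n + 1)) : ℕ) = 0 := by rw [Fin.val_add_one, if_pos h]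
      have h2 : (i : ℕ) = n := by rw [h, Fin.val_last]
      have := c.adj_getVert_succ (i := n) (by omega)
      rw [hf]
      simp only [h1, h2]
      have h0 : c.getVert 0 = c.getVert (n + 1) := by
        rw [Walk.getVert_zero, ← hlen, Walk.getVert_length]
      rw [h0]
      exact this
    · have h1 : ((i + 1 : Fin (n + 1)) : ℕ) = (i : ℕ) + 1 := by rw [Fin.val_add_one, if_neg h]
      have := c.adj_getVert_succ (i := (i : ℕ)) (hflt i)
      rw [hf]
      simp only [h1]
      exact this
  have helper : ∀ (i j : Fin (n + 1)) (k : ℕ), k < c.length → f i = c.getVert k →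
      f j = c.getVert (k + 1) → j = i + 1 := by
    intro i j k hk h1 h2
    have hik : (i : ℕ) = k := aux_cycle_getVert_injOn hc (hflt i) hk h1
    by_cases hk1 : k + 1 < c.length
    · have hjk : (j : ℕ) = k + 1 := aux_cycle_getVert_injOn hc (hflt j) hk1 h2
      apply Fin.ext
      rw [Fin.val_add_one]
      split
      · next hlast => exfalso; rw [hlast, Fin.val_last] at hik; omega
      · omega
    · have hk1e : k + 1 = c.length := by omega
      have hj0 : f j = c.getVert 0 := by
        rw [h2, hk1e, Walk.getVert_length, Walk.getVert_zero]
      have hj0' : (j : ℕ) = 0 :=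
        aux_cycle_getVert_injOn hc (hflt j) (by omega) hj0
      apply Fin.ext
      rw [Fin.val_add_one]
      split
      · next => omega
      · next hlast =>
        exfalso
        apply hlast
        apply Fin.ext
        rw [Fin.val_last]
        omega
  have hadj2 : ∀ i j : Fin (n + 1), G.Adj (f i) (f j) → j = i + 1 ∨ i = j + 1 := by
    intro i j hij
    have he : s(f i, f j) ∈ c.edges := (hmemedge _).mp hij
    obtain ⟨k, hk, hs⟩ := aux_mem_edges he
    rw [Sym2.eq_iff] at hs
    rcases hs with ⟨h1, h2⟩ | ⟨h1, h2⟩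
    · exact Or.inl (helper i j k hk h1 h2)
    · exact Or.inr (helper j i k hk h2 h1)
  refine ⟨(SimpleGraph.Iso.symm ⟨Equiv.ofBijective f hbij, ?_⟩ : G ≃g _)⟩
  intro a b
  show G.Adj (f a) (f b) ↔ (cycleGraph (n + 1)).Adj a b
  constructor
  · intro h
    rw [cycleGraph_adj']
    rcases hadj2 a b h with h' | h'
    · right
      rw [h']
      rw [show a + 1 - a = 1 by abel, hone]
    · left
      rw [h']
      rw [show b + 1 - b = 1 by abel, hone]
  · intro h
    rw [cycleGraph_adj'] at h
    rcases h with h' | h'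
    · have : a = b + 1 := by
        have h1 : a - b = 1 := Fin.ext (by rw [h', hone])
        exact (eq_add_of_sub_eq h1).trans (add_comm 1 b)
      rw [this]
      exact (hadj1 b).symm
    · have : b = a + 1 := by
        have h1 : b - a = 1 := Fin.ext (by rw [h', hone])
        exact (eq_add_of_sub_eq h1).trans (add_comm 1 a)
      rw [this]
      exact hadj1 a
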